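/- For every real p with 0 ≤ p ≤ 1/2, the strategy S₁ is the most successful of the three: F₂(p) ≤ F₁(p) and F₃(p) ≤ F₁(p), with equality of all three at p = 1/2 where F₁(1/2) = F₂(1/2) = F₃(1/2) = 7/20. -/
import Mathlib


/-- Win rate of strategy `S₁`. -/
noncomputable def F₁ (p : ℝ) : ℝ :=
  p * (1 + p + p ^ 2 + 3 * p ^ 3 - 3 * p ^ 4 + p ^ 5) /
    ((1 + p) * (2 - p) * (1 + p ^ 2))

/-- Win rate of strategy `S₂`. -/
noncomputable def F₂ (p : ℝ) : ℝ :=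
  p * (1 - p + p ^ 2 + p ^ 3) / (2 - 3 * p + 3 * p ^ 2)

/-- Win rate of strategy `S₃`. -/
noncomputable def F₃ (p : ℝ) : ℝ :=
  p * (1 + 5 * p - 10 * p ^ 2 + 10 * p ^ 3 - 5 * p ^ 4 + p ^ 5) /
    ((2 - 2 * p + p ^ 2) * (1 + p) * (2 - p))

/-- For `0 ≤ p ≤ 1/2`, `S₁` is the most successful of the three strategies, with
all three agreeing at `p = 1/2` where their value is `7/20`. -/
theorem S1_best_below_half :
    (∀ p : ℝ, 0 ≤ p → p ≤ 1 / 2 → F₂ p ≤ F₁ p ∧ F₃ p ≤ F₁ p) ∧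
    F₁ (1 / 2) = 7 / 20 ∧ F₂ (1 / 2) = 7 / 20 ∧ F₃ (1 / 2) = 7 / 20 := by
  refine ⟨?_, by norm_num [F₁], by norm_num [F₂], by norm_num [F₃]⟩
  intro p hp0 hp
  have h1 : (0:ℝ) < 1 + p := by linarith
  have h2 : (0:ℝ) < 2 - p := by linarith
  have h3 : (0:ℝ) < 1 + p ^ 2 := by positivity
  have hq : (0:ℝ) ≤ 1 - 2 * p := by linarith
  have hsq : (0:ℝ) ≤ p ^ 2 := sq_nonneg p
  have c1 : (0:ℝ) ≤ p ^ 2 * (1 - 2 * p) := mul_nonneg hsq hq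
  have h4 : (0:ℝ) < 2 - 3 * p + 3 * p ^ 2 := by linarith
  have h5 : (0:ℝ) < 2 - 2 * p + p ^ 2 := by linarith
  have cubic : (0:ℝ) ≤ 3 - 6 * p + 5 * p ^ 2 - 2 * p ^ 3 := by linarith
  have hprod1 : (0:ℝ) ≤ p ^ 4 * ((1 - 2 * p) * (3 - 6 * p + 5 * p ^ 2 - 2 * p ^ 3)) :=
    mul_nonneg (pow_nonneg hp0 4) (mul_nonneg hq cubic)
  have e1 : (0:ℝ) ≤ 3 - 6 * p + 2 * p ^ 2 := by linarith
  have e2 : (0:ℝ) ≤ p ^ 3 * (3 - 6 * p + 2 * p ^ 2) := mul_nonneg (pow_nonneg hp0 3) e1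
  have e3 : (0:ℝ) ≤ 2 - 5 * p + 4 * p ^ 2 := by nlinarith [sq_nonneg (8 * p - 5)]
  have quint : (0:ℝ) ≤ 2 - 5 * p + 4 * p ^ 2 + 3 * p ^ 3 - 6 * p ^ 4 + 2 * p ^ 5 := by
    have : p ^ 3 * (3 - 6 * p + 2 * p ^ 2) = 3 * p ^ 3 - 6 * p ^ 4 + 2 * p ^ 5 := by ring
    linarith [e2, e3]
  have hprod2 : (0:ℝ) ≤ p * ((1 - 2 * p) *
      (2 - 5 * p + 4 * p ^ 2 + 3 * p ^ 3 - 6 * p ^ 4 + 2 * p ^ 5)) :=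
    mul_nonneg hp0 (mul_nonneg hq quint)
  constructor
  · rw [F₂, F₁, div_le_div_iff₀ h4 (by positivity)]
    have key : p * (1 + p + p ^ 2 + 3 * p ^ 3 - 3 * p ^ 4 + p ^ 5) * (2 - 3 * p + 3 * p ^ 2)
        - p * (1 - p + p ^ 2 + p ^ 3) * ((1 + p) * (2 - p) * (1 + p ^ 2))
        = p ^ 4 * ((1 - 2 * p) * (3 - 6 * p + 5 * p ^ 2 - 2 * p ^ 3)) := by ring
    linarith [hprod1, key.ge, key.le]
  · rw [F₃, F₁, div_le_div_iff₀ (by positivity) (by positivity)]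
    have key : p * (1 + p + p ^ 2 + 3 * p ^ 3 - 3 * p ^ 4 + p ^ 5)
        * ((2 - 2 * p + p ^ 2) * (1 + p) * (2 - p))
        - p * (1 + 5 * p - 10 * p ^ 2 + 10 * p ^ 3 - 5 * p ^ 4 + p ^ 5)
        * ((1 + p) * (2 - p) * (1 + p ^ 2))
        = p * ((1 - 2 * p)
          * (2 - 5 * p + 4 * p ^ 2 + 3 * p ^ 3 - 6 * p ^ 4 + 2 * p ^ 5)) := by ring
    linarith [hprod2, key.ge, key.le]
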